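/- Every Gold-style learner that explanatorily learns a language L has a locking sequence for L: if for every text T for L the hypothesis sequence n ↦ h(T[n]) converges syntactically to a hypothesis whose denoted language is L, then there exists a finite sequence σ of elements of L (and pauses) such that for every finite sequence τ over L ∪ {#}, h(σ ⌢ τ) = h(σ) and the language denoted by h(σ) is L. -/

import Mathlib

/-- The content of a text `T : ℕ → Option ℕ` (with `none` as the pause symbol `#`). -/
def content (T : ℕ → Option ℕ) : Set ℕ := {x | ∃ n, T n = some x}

/-- The length-`n` initial segment `T[n]` of a text, as a finite sequence. -/
def seg (T : ℕ → Option ℕ) (n : ℕ) : List (Option ℕ) := (List.range n).map T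

/-- The content of a finite sequence over `ℕ ∪ {#}`. -/
def lcontent (σ : List (Option ℕ)) : Set ℕ := {x | (some x) ∈ σ}

open Classical

/-- Default enumeration of `L` as a text. -/
noncomputable def enumL (L : Set ℕ) (k : ℕ) : Option ℕ :=
  if k ∈ L then some k else none

/-- Stage-`k` approximation of the adversarial text. -/
noncomputable def stage (h : List (Option ℕ) → ℕ) (L : Set ℕ) : ℕ → List (Option ℕ)
  | 0 => []
  | k+1 =>
    let π := stage h L k ++ [enumL L k]
    if c : ∃ τ, lcontent τ ⊆ L ∧ h (π ++ τ) ≠ h π then π ++ c.choose else π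

lemma lcontent_append (a b : List (Option ℕ)) : lcontent (a ++ b) = lcontent a ∪ lcontent b := by
  ext x; simp [lcontent]

lemma lcontent_stage (h : List (Option ℕ) → ℕ) (L : Set ℕ) (k : ℕ) :
    lcontent (stage h L k) ⊆ L := by
  induction k with
  | zero => intro x hx; simp [stage, lcontent] at hx
  | succ k ih =>
      have he : lcontent [enumL L k] ⊆ L := by
        intro x hx
        simp [lcontent, enumL] at hx
        obtain ⟨h1, rfl⟩ := hx
        exact h1
      have hπ : lcontent (stage h L k ++ [enumL L k]) ⊆ L := by
        rw [lcontent_append]; exact Set.union_subset ih he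
      rw [stage]
      split
      · next c =>
          rw [lcontent_append]
          exact Set.union_subset hπ c.choose_spec.1
      · exact hπ

lemma stage_prefix_succ (h : List (Option ℕ) → ℕ) (L : Set ℕ) (k : ℕ) :
    stage h L k ++ [enumL L k] <+: stage h L (k+1) := by
  rw [stage]
  split
  · exact ⟨_, rfl⟩
  · exact List.prefix_refl _

lemma stage_prefix (h : List (Option ℕ) → ℕ) (L : Set ℕ) {k m : ℕ} (hkm : k ≤ m) :
    stage h L k <+: stage h L m := by
  induction m with
  | zero => simp_all
  | succ m ih =>
      rcases Nat.lt_or_ge k (m+1) with hlt | hge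
      · exact ((ih (Nat.lt_succ_iff.mp hlt)).trans
          ((List.prefix_append _ _).trans (stage_prefix_succ h L m)))
      · have : k = m + 1 := le_antisymm hkm hge
        subst this; exact List.prefix_refl _

lemma stage_length (h : List (Option ℕ) → ℕ) (L : Set ℕ) (k : ℕ) :
    k ≤ (stage h L k).length := by
  induction k with
  | zero => simp
  | succ k ih =>
      have := (stage_prefix_succ h L k).length_le
      simp only [List.length_append, List.length_singleton] at this
      omega

/-- The adversarial text. -/
noncomputable def advT (h : List (Option ℕ) → ℕ) (L : Set ℕ) (n : ℕ) : Option ℕ :=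
  (stage h L (n+1)).getD n none

lemma advT_eq (h : List (Option ℕ) → ℕ) (L : Set ℕ) {k n : ℕ} (hn : n < (stage h L k).length) :
    advT h L n = (stage h L k)[n] := by
  have h1 : n < (stage h L (n+1)).length := lt_of_lt_of_le (Nat.lt_succ_self n) (stage_length h L (n+1))
  rw [advT, List.getD_eq_getElem _ _ h1]
  rcases Nat.le_total (n+1) k with hle | hle
  · exact (stage_prefix h L hle).getElem h1
  · exact ((stage_prefix h L hle).getElem hn).symm

lemma seg_advT (h : List (Option ℕ) → ℕ) (L : Set ℕ) (k : ℕ) :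
    seg (advT h L) (stage h L k).length = stage h L k := by
  apply List.ext_getElem
  · simp [seg]
  · intro n h1 h2
    simp only [seg, List.getElem_map, List.getElem_range]
    exact advT_eq h L h2

lemma content_advT (h : List (Option ℕ) → ℕ) (L : Set ℕ) : content (advT h L) = L := by
  ext x
  constructor
  · rintro ⟨n, hn⟩
    have h1 : n < (stage h L (n+1)).length :=
      lt_of_lt_of_le (Nat.lt_succ_self n) (stage_length h L (n+1))
    have heq : (stage h L (n+1))[n] = some x := by rw [← advT_eq h L h1]; exact hn
    apply lcontent_stage h L (n+1)
    have : some x ∈ stage h L (n+1) := by rw [← heq]; exact List.getElem_mem h1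
    exact this
  · intro hx
    refine ⟨(stage h L x).length, ?_⟩
    have hp := stage_prefix_succ h L x
    have hlen : (stage h L x).length < (stage h L (x+1)).length := by
      have := hp.length_le; simp only [List.length_append, List.length_singleton] at this; omega
    rw [advT_eq h L hlen]
    have := hp.getElem (i := (stage h L x).length)
      (by simp)
    rw [← this]
    simp [enumL, hx]

/-- Blum–Blum locking sequence lemma for explanatory learning: any Gold-style learner
that Ex-learns `L` on every text for `L` has a locking sequence for `L`. -/
theorem locking_sequence (H : ℕ → Set ℕ) (h : List (Option ℕ) → ℕ) (L : Set ℕ)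
    (hLearn : ∀ T : ℕ → Option ℕ, content T = L →
      ∃ n₀, ∀ n ≥ n₀, h (seg T n) = h (seg T n₀) ∧ H (h (seg T n₀)) = L) :
    ∃ σ : List (Option ℕ), lcontent σ ⊆ L ∧
      (∀ τ : List (Option ℕ), lcontent τ ⊆ L → h (σ ++ τ) = h σ) ∧
      H (h σ) = L := by
  obtain ⟨n₀, hn₀⟩ := hLearn (advT h L) (content_advT h L)
  -- pick stage k with length ≥ n₀
  set k := n₀ with hk
  have hklen : n₀ ≤ (stage h L k).length := stage_length h L k
  set π : List (Option ℕ) := stage h L k ++ [enumL L k] with hπ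
  have hπlen : n₀ ≤ π.length := by
    simp only [hπ, List.length_append, List.length_singleton]; omega
  have hπpre : π <+: stage h L (k+1) := stage_prefix_succ h L k
  have hsegπ : seg (advT h L) π.length = π := by
    apply List.ext_getElem
    · simp [seg]
    · intro n h1 h2
      simp only [seg, List.getElem_map, List.getElem_range]
      exact advT_eq h L (h2.trans_le hπpre.length_le) |>.trans (hπpre.getElem h2).symm
  have hπcont : lcontent π ⊆ L := by
    intro x hx
    exact lcontent_stage h L (k+1) (hπpre.subset hx)
  by_cases c : ∃ τ, lcontent τ ⊆ L ∧ h (π ++ τ) ≠ h π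
  · -- the text changes its mind past n₀: contradiction
    exfalso
    have hstage : stage h L (k+1) = π ++ c.choose := by
      rw [stage]; simp only [← hπ]; rw [dif_pos c]
    have h1 : h (seg (advT h L) π.length) = h (seg (advT h L) n₀) :=
      (hn₀ π.length hπlen).1
    have h2 : h (seg (advT h L) (stage h L (k+1)).length) = h (seg (advT h L) n₀) :=
      (hn₀ _ (hπlen.trans (hπpre.length_le))).1
    rw [seg_advT, hstage] at h2
    rw [hsegπ] at h1
    exact c.choose_spec.2 (h2.trans h1.symm)
  · push_neg at c
    refine ⟨π, hπcont, c, ?_⟩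
    have h1 := (hn₀ π.length hπlen).1
    have h2 := (hn₀ π.length hπlen).2
    rw [hsegπ] at h1
    rw [← h1] at h2
    exact h2
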